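/- Fix integers n ≥ 1, b ≥ 2, k ≥ 0. In the multivariate polynomial ring ℤ[z_1, …, z_n], let h_k^{(b)} denote the sum of the monomials z_1^{x_1}⋯z_n^{x_n} over all tuples (x_1, …, x_n) ∈ {0, 1, …, b−1}^n with x_1 + ⋯ + x_n = k, let e_ℓ denote the elementary symmetric polynomial of degree ℓ in z_1, …, z_n, and let h_m denote the complete homogeneous symmetric polynomial of degree m in z_1, …, z_n (with h_m = 0 for m < 0). Then h_k^{(b)} = ∑_{ℓ ≥ 0} (−1)^ℓ · e_ℓ(z_1^b, …, z_n^b) · h_{k − bℓ}, where e_ℓ(z_1^b, …, z_n^b) denotes the polynomial obtained from e_ℓ by substituting z_i^b for z_i. -/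

import Mathlib

open MvPolynomial Finset

namespace Stmt13Aux

variable (n : ℕ)

/-- The monomial `∏ X i ^ y i`. -/
noncomputable def mono (y : Fin n → ℕ) : MvPolynomial (Fin n) ℤ := ∏ i, X i ^ y i

/-- Exponent vectors of total degree `m`. -/
def D (m : ℕ) : Finset (Fin n → ℕ) :=
  (Fintype.piFinset fun _ : Fin n => Finset.range (m + 1)).filter fun y => ∑ i, y i = m

lemma mem_D {n m : ℕ} {y : Fin n → ℕ} : y ∈ D n m ↔ ∑ i, y i = m := by
  simp only [D, mem_filter, Fintype.mem_piFinset, mem_range]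
  refine ⟨fun h => h.2, fun h => ⟨fun i => Nat.lt_succ_of_le ?_, h⟩⟩
  exact h ▸ Finset.single_le_sum (fun _ _ => Nat.zero_le _) (mem_univ i)

lemma count_mk (y : Fin n → ℕ) (a : Fin n) :
    Multiset.count a (∑ i, y i • ({i} : Multiset (Fin n))) = y a := by
  simp [Multiset.count_sum', Multiset.count_singleton, mul_ite]

lemma card_mk (y : Fin n → ℕ) :
    Multiset.card (∑ i, y i • ({i} : Multiset (Fin n))) = ∑ i, y i := by
  rw [Multiset.card_sum]
  simp

lemma hsymm_eq (m : ℕ) : hsymm (Fin n) ℤ m = ∑ y ∈ D n m, mono n y := by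
  rw [hsymm]
  refine Finset.sum_bij' (fun s _ => fun i => s.1.count i)
    (fun y hy => ⟨∑ i, y i • ({i} : Multiset (Fin n)), by
      rw [card_mk]; exact mem_D.1 hy⟩)
    (fun s _ => ?_) (fun y hy => mem_univ _) (fun s _ => ?_) (fun y hy => ?_) (fun s _ => ?_)
  · show (fun i => Multiset.count i s.1) ∈ D n m
    refine mem_D.2 ?_
    have h2 : ∑ i : Fin n, Multiset.count i s.1 = ∑ i ∈ s.1.toFinset, Multiset.count i s.1 :=
      (Finset.sum_subset (Finset.subset_univ _) fun i _ hi =>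
        Multiset.count_eq_zero_of_notMem (by simpa using hi)).symm
    rw [h2, Multiset.toFinset_sum_count_eq, s.2]
  · ext a
    simp [count_mk]
  · funext i
    simp [count_mk]
  · show (Multiset.map X s.1).prod = mono n fun i => Multiset.count i s.1
    rw [mono, Finset.prod_multiset_map_count]
    refine Finset.prod_subset (Finset.subset_univ _) fun i _ hi => ?_
    rw [Multiset.count_eq_zero_of_notMem (by simpa using hi), pow_zero]

lemma lhs_eq {n b k : ℕ} :
    (∑ x ∈ Finset.univ.filter (fun x : Fin n → Fin b => (∑ i, (x i : ℕ)) = k),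
        ∏ i, (X i : MvPolynomial (Fin n) ℤ) ^ (x i : ℕ)) =
      ∑ y ∈ (D n k).filter (fun y => ∀ i, y i < b), mono n y := by
  refine Finset.sum_bij' (fun x _ => fun i => (x i : ℕ))
    (fun y hy => fun i => ⟨y i, (mem_filter.1 hy).2 i⟩) (fun x hx => ?_) (fun y hy => ?_)
    (fun x _ => rfl) (fun y hy => rfl) (fun x _ => rfl)
  · rw [mem_filter]
    exact ⟨mem_D.2 (mem_filter.1 hx).2, fun i => (x i).isLt⟩
  · rw [mem_filter]
    exact ⟨mem_univ _, mem_D.1 (mem_filter.1 hy).1⟩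

lemma sum_indicator (b : ℕ) (S : Finset (Fin n)) :
    ∑ i : Fin n, (if i ∈ S then b else 0) = b * S.card := by
  rw [Finset.sum_ite_mem, Finset.univ_inter, Finset.sum_const, smul_eq_mul, mul_comm]

lemma shift {n b k : ℕ} (S : Finset (Fin n)) (hS : b * S.card ≤ k) :
    (∏ i ∈ S, (X i : MvPolynomial (Fin n) ℤ) ^ b) * hsymm (Fin n) ℤ (k - b * S.card) =
      ∑ y ∈ (D n k).filter (fun y => ∀ i ∈ S, b ≤ y i), mono n y := by
  rw [hsymm_eq, Finset.mul_sum]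
  refine Finset.sum_bij' (fun x _ => fun i => x i + if i ∈ S then b else 0)
    (fun y _ => fun i => y i - if i ∈ S then b else 0)
    (fun x hx => ?_) (fun y hy => ?_) (fun x hx => ?_) (fun y hy => ?_) (fun x hx => ?_)
  · rw [mem_filter]
    constructor
    · refine mem_D.2 ?_
      rw [Finset.sum_add_distrib, mem_D.1 hx, sum_indicator]
      omega
    · intro i hi
      simp [hi]
  · have hyk := mem_D.1 (mem_filter.1 hy).1
    have hyb := (mem_filter.1 hy).2
    refine mem_D.2 ?_
    show ∑ i : Fin n, (y i - if i ∈ S then b else 0) = k - b * S.card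
    rw [Finset.sum_tsub_distrib _ (fun i _ => ?_), hyk, sum_indicator]
    by_cases hi : i ∈ S <;> simp [hi, hyb i]
  · funext i
    by_cases hi : i ∈ S <;> simp [hi]
  · have hyb := (mem_filter.1 hy).2
    funext i
    by_cases hi : i ∈ S
    · have := hyb i hi
      simp only [hi, if_true]
      omega
    · simp [hi]
  · show (∏ i ∈ S, (X i : MvPolynomial (Fin n) ℤ) ^ b) * mono n x =
        mono n fun i => x i + if i ∈ S then b else 0
    rw [mono, mono]
    have h1 : (∏ i : Fin n, (X i : MvPolynomial (Fin n) ℤ) ^ (if i ∈ S then b else 0)) =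
        ∏ i ∈ S, (X i : MvPolynomial (Fin n) ℤ) ^ b := by
      have h2 : ∀ i : Fin n, (X i : MvPolynomial (Fin n) ℤ) ^ (if i ∈ S then b else 0) =
          (if i ∈ S then (X i : MvPolynomial (Fin n) ℤ) ^ b else 1) := by
        intro i; by_cases hi : i ∈ S <;> simp [hi]
      rw [Finset.prod_congr rfl fun i _ => h2 i, Finset.prod_ite_mem, Finset.univ_inter]
    rw [← h1, ← Finset.prod_mul_distrib]
    refine Finset.prod_congr rfl fun i _ => ?_
    rw [← pow_add, add_comm]

lemma shift_empty {n b k : ℕ} (S : Finset (Fin n)) (hS : ¬ b * S.card ≤ k) :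
    (D n k).filter (fun y => ∀ i ∈ S, b ≤ y i) = ∅ := by
  rw [Finset.filter_eq_empty_iff]
  intro y hy hb
  have h1 : ∑ i ∈ S, b ≤ ∑ i ∈ S, y i := Finset.sum_le_sum hb
  have h2 : ∑ i ∈ S, y i ≤ ∑ i, y i :=
    Finset.sum_le_sum_of_subset (Finset.subset_univ S)
  rw [Finset.sum_const, smul_eq_mul, mul_comm] at h1
  rw [mem_D.1 hy] at h2
  omega

lemma neg_one_powerset (n : ℕ) (P : Finset (Fin n)) :
    (∑ S ∈ P.powerset, (-1 : MvPolynomial (Fin n) ℤ) ^ S.card) =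
      if P = ∅ then 1 else 0 := by
  have h := Finset.sum_powerset_neg_one_pow_card (x := P)
  have : (∑ S ∈ P.powerset, (-1 : MvPolynomial (Fin n) ℤ) ^ S.card) =
      ((∑ S ∈ P.powerset, (-1 : ℤ) ^ S.card : ℤ) : MvPolynomial (Fin n) ℤ) := by
    push_cast
    rfl
  rw [this, h]
  split <;> simp

end Stmt13Aux

open Stmt13Aux

theorem stmt_13 (n b k : ℕ) (hn : 1 ≤ n) (hb : 2 ≤ b) :
    (∑ x ∈ Finset.univ.filter (fun x : Fin n → Fin b => (∑ i, (x i : ℕ)) = k),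
        ∏ i, (X i : MvPolynomial (Fin n) ℤ) ^ (x i : ℕ)) =
      ∑ ℓ ∈ Finset.range (k + 1),
        if b * ℓ ≤ k then
          (-1) ^ ℓ * MvPolynomial.bind₁ (fun i : Fin n => (X i) ^ b)
              (MvPolynomial.esymm (Fin n) ℤ ℓ) *
            MvPolynomial.hsymm (Fin n) ℤ (k - b * ℓ)
        else 0 := by
  classical
  set g : Finset (Fin n) → MvPolynomial (Fin n) ℤ := fun S =>
    if b * S.card ≤ k then
      (-1) ^ S.card * ((∏ i ∈ S, (X i : MvPolynomial (Fin n) ℤ) ^ b) *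
        hsymm (Fin n) ℤ (k - b * S.card))
    else 0 with hg
  -- Step 1: rewrite each summand via powersetCard
  have step1 : ∀ ℓ : ℕ,
      (if b * ℓ ≤ k then
          (-1) ^ ℓ * MvPolynomial.bind₁ (fun i : Fin n => (X i : MvPolynomial (Fin n) ℤ) ^ b)
              (MvPolynomial.esymm (Fin n) ℤ ℓ) *
            MvPolynomial.hsymm (Fin n) ℤ (k - b * ℓ)
        else 0) = ∑ S ∈ powersetCard ℓ (univ : Finset (Fin n)), g S := by
    intro ℓ
    have hbind : MvPolynomial.bind₁ (fun i : Fin n => (X i : MvPolynomial (Fin n) ℤ) ^ b)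
        (MvPolynomial.esymm (Fin n) ℤ ℓ) =
        ∑ S ∈ powersetCard ℓ (univ : Finset (Fin n)), ∏ i ∈ S, X i ^ b := by
      rw [esymm, map_sum]
      refine Finset.sum_congr rfl fun S _ => ?_
      rw [map_prod]
      simp
    by_cases h : b * ℓ ≤ k
    · rw [if_pos h, hbind, Finset.mul_sum, Finset.sum_mul]
      refine Finset.sum_congr rfl fun S hS => ?_
      have hcard : S.card = ℓ := (mem_powersetCard.1 hS).2
      simp only [hg, hcard]
      rw [if_pos h, mul_assoc]
    · rw [if_neg h]
      refine (Finset.sum_eq_zero fun S hS => ?_).symm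
      have hcard : S.card = ℓ := (mem_powersetCard.1 hS).2
      simp only [hg, hcard]
      rw [if_neg h]
  rw [Finset.sum_congr rfl fun ℓ _ => step1 ℓ]
  -- Step 2: combine into a single sum over the powerset
  have step2 : (∑ ℓ ∈ Finset.range (k + 1),
      ∑ S ∈ powersetCard ℓ (univ : Finset (Fin n)), g S) =
      ∑ S ∈ (univ : Finset (Fin n)).powerset, g S := by
    rw [Finset.sum_powerset, Finset.card_univ, Fintype.card_fin]
    set N := max n k with hN
    have e1 : (∑ ℓ ∈ Finset.range (k + 1),
        ∑ S ∈ powersetCard ℓ (univ : Finset (Fin n)), g S) =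
        ∑ ℓ ∈ Finset.range (N + 1), ∑ S ∈ powersetCard ℓ (univ : Finset (Fin n)), g S := by
      refine Finset.sum_subset (Finset.range_subset_range.2 (by omega)) fun ℓ _ hℓ => ?_
      rw [Finset.mem_range, not_lt] at hℓ
      refine Finset.sum_eq_zero fun S hS => ?_
      have hcard : S.card = ℓ := (mem_powersetCard.1 hS).2
      simp only [hg, hcard]
      rw [if_neg ?_]
      have : ℓ ≤ b * ℓ := Nat.le_mul_of_pos_left ℓ (by omega)
      omega
    have e2 : (∑ ℓ ∈ Finset.range (n + 1),
        ∑ S ∈ powersetCard ℓ (univ : Finset (Fin n)), g S) =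
        ∑ ℓ ∈ Finset.range (N + 1), ∑ S ∈ powersetCard ℓ (univ : Finset (Fin n)), g S := by
      refine Finset.sum_subset (Finset.range_subset_range.2 (by omega)) fun ℓ _ hℓ => ?_
      rw [Finset.mem_range, not_lt] at hℓ
      have : powersetCard ℓ (univ : Finset (Fin n)) = ∅ :=
        Finset.powersetCard_eq_empty.2 (by rw [Finset.card_univ, Fintype.card_fin]; omega)
      rw [this, Finset.sum_empty]
    rw [e1, e2]
  rw [step2]
  -- Step 3: each subset's contribution as a sum over exponent vectors
  have step3 : ∀ S ∈ (univ : Finset (Fin n)).powerset, g S =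
      ∑ y ∈ D n k, if S ⊆ univ.filter (fun i => b ≤ y i) then
        (-1 : MvPolynomial (Fin n) ℤ) ^ S.card * mono n y else 0 := by
    intro S _
    have hsub : ∀ y : Fin n → ℕ,
        (S ⊆ univ.filter (fun i => b ≤ y i)) ↔ (∀ i ∈ S, b ≤ y i) := by
      intro y
      constructor
      · intro h i hi
        exact (mem_filter.1 (h hi)).2
      · intro h i hi
        exact mem_filter.2 ⟨mem_univ _, h i hi⟩
    have key : (∑ y ∈ D n k, if S ⊆ univ.filter (fun i => b ≤ y i) then
        (-1 : MvPolynomial (Fin n) ℤ) ^ S.card * mono n y else 0) =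
        ∑ y ∈ (D n k).filter (fun y => ∀ i ∈ S, b ≤ y i),
          (-1 : MvPolynomial (Fin n) ℤ) ^ S.card * mono n y := by
      rw [Finset.sum_filter]
      refine Finset.sum_congr rfl fun y _ => ?_
      exact if_congr (hsub y) rfl rfl
    rw [key]
    by_cases h : b * S.card ≤ k
    · simp only [hg]
      rw [if_pos h, shift S h, Finset.mul_sum]
    · simp only [hg]
      rw [if_neg h, shift_empty S h, Finset.sum_empty]
  rw [Finset.sum_congr rfl step3, Finset.sum_comm]
  -- Step 4: inclusion–exclusion per exponent vector
  have step4 : ∀ y ∈ D n k,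
      (∑ S ∈ (univ : Finset (Fin n)).powerset,
        if S ⊆ univ.filter (fun i => b ≤ y i) then
          (-1 : MvPolynomial (Fin n) ℤ) ^ S.card * mono n y else 0) =
      if (∀ i, y i < b) then mono n y else 0 := by
    intro y _
    set T := univ.filter (fun i => b ≤ y i) with hT
    have e1 : (∑ S ∈ (univ : Finset (Fin n)).powerset,
        if S ⊆ T then (-1 : MvPolynomial (Fin n) ℤ) ^ S.card * mono n y else 0) =
        ∑ S ∈ T.powerset, (-1 : MvPolynomial (Fin n) ℤ) ^ S.card * mono n y := by
      rw [← Finset.sum_filter]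
      refine Finset.sum_congr ?_ fun _ _ => rfl
      ext S
      simp [Finset.mem_powerset]
    rw [e1, ← Finset.sum_mul, neg_one_powerset]
    have e2 : (T = ∅) ↔ ∀ i, y i < b := by
      rw [hT, Finset.filter_eq_empty_iff]
      simp only [Finset.mem_univ, true_implies, not_le]
    split
    · rw [if_pos (e2.1 (by assumption)), one_mul]
    · rw [if_neg (fun h => ‹¬ T = ∅› (e2.2 h)), zero_mul]
  rw [Finset.sum_congr rfl step4, ← Finset.sum_filter]
  exact lhs_eq
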